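/- Let γ ∈ (0,1/2). There exists a constant C = C(γ) < ∞ such that for every a ∈ (0, e^{-2}), ∫_{a}^{e²a} σ^{γ−1} · (σ·(log σ − log a) − (σ − a))^{−γ} dσ ≤ C. (One may take C = 2^γ · ∫_{1}^{e²} β^γ (β−1)^{−2γ} dβ, which is finite and independent of a.) -/

import Mathlib

open MeasureTheory

lemma aux_log (t : ℝ) (ht0 : 0 < t) (ht1 : t ≤ 1) :
    Real.log t ≤ t - 1 - (1 - t) ^ 2 / 2 := by
  set G : ℝ → ℝ := fun x => Real.log x - (x - 1 - (1 - x) ^ 2 / 2) with hGdef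
  have hG : ∀ x : ℝ, 0 < x → HasDerivAt G ((x - 1) ^ 2 / x) x := by
    intro x hx
    have h1 : HasDerivAt Real.log x⁻¹ x := Real.hasDerivAt_log hx.ne'
    have h2 : HasDerivAt (fun x : ℝ => x - 1 - (1 - x) ^ 2 / 2)
        (1 - (2 * (1 - x) ^ 1 * (0 - 1)) / 2) x := by
      exact (((hasDerivAt_id x).sub_const 1).sub
        ((((hasDerivAt_const x 1).sub (hasDerivAt_id x)).pow 2).div_const 2))
    have : HasDerivAt G (x⁻¹ - (1 - 2 * (1 - x) ^ 1 * (0 - 1) / 2)) x := h1.sub h2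
    convert this using 1
    field_simp
    ring
  have hmono : MonotoneOn G (Set.Icc t 1) := by
    have hsub : Set.Icc t 1 ⊆ {x : ℝ | 0 < x} := fun x hx => lt_of_lt_of_le ht0 hx.1
    apply monotoneOn_of_deriv_nonneg (convex_Icc t 1)
    · apply ContinuousOn.sub
      · exact Real.continuousOn_log.mono (fun x hx => ne_of_gt (hsub hx))
      · fun_prop
    · intro x hx
      rw [interior_Icc] at hx
      exact (hG x (lt_of_lt_of_le ht0 hx.1.le)).differentiableAt.differentiableWithinAt
    · intro x hx
      rw [interior_Icc] at hx
      have hx0 : 0 < x := lt_of_lt_of_le ht0 hx.1.le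
      rw [(hG x hx0).deriv]
      positivity
  have h := hmono (Set.mem_Icc.mpr ⟨le_refl t, ht1⟩) (Set.mem_Icc.mpr ⟨ht1, le_refl 1⟩) ht1
  simp only [hGdef, Real.log_one] at h
  nlinarith [h]

lemma aux_key (a σ : ℝ) (ha : 0 < a) (hσ : a < σ) :
    (σ - a) ^ 2 / (2 * σ) ≤ σ * (Real.log σ - Real.log a) - (σ - a) := by
  have hσ0 : 0 < σ := ha.trans hσ
  have h := aux_log (a / σ) (div_pos ha hσ0) (by rw [div_le_one hσ0]; exact hσ.le)
  rw [Real.log_div ha.ne' hσ0.ne'] at h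
  have h2 : σ * (Real.log a - Real.log σ) ≤ σ * (a / σ - 1 - (1 - a / σ) ^ 2 / 2) :=
    mul_le_mul_of_nonneg_left h hσ0.le
  have e1 : σ * (a / σ) = a := by field_simp
  have e2 : σ * ((1 - a / σ) ^ 2) = (σ - a) ^ 2 / σ := by field_simp
  rw [div_le_iff₀ (by positivity)]
  nlinarith [h2, sq_nonneg (σ - a)]

lemma aux_bound (γ a σ : ℝ) (hγ0 : 0 < γ) (hγ1 : γ < 1/2) (ha : 0 < a) (hσ : a < σ) :
    σ ^ (γ - 1) * (σ * (Real.log σ - Real.log a) - (σ - a)) ^ (-γ)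
      ≤ 2 ^ γ * a ^ (2 * γ - 1) * (σ - a) ^ (-(2 * γ)) := by
  have hσ0 : 0 < σ := ha.trans hσ
  have hsa : 0 < σ - a := sub_pos.mpr hσ
  have hd : 0 < (σ - a) ^ 2 / (2 * σ) := by positivity
  have hkey := aux_key a σ ha hσ
  have h1 : (σ * (Real.log σ - Real.log a) - (σ - a)) ^ (-γ)
      ≤ ((σ - a) ^ 2 / (2 * σ)) ^ (-γ) :=
    Real.rpow_le_rpow_of_nonpos hd hkey (neg_nonpos.mpr hγ0.le)
  have h2 : ((σ - a) ^ 2 / (2 * σ)) ^ (-γ) = (2 * σ) ^ γ * (σ - a) ^ (-(2 * γ)) := by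
    rw [Real.div_rpow (sq_nonneg _) (by positivity)]
    rw [← Real.rpow_natCast (σ - a) 2, ← Real.rpow_mul hsa.le]
    rw [Real.rpow_neg (by positivity : (0:ℝ) ≤ 2 * σ), div_eq_mul_inv, inv_inv]
    push_cast
    rw [show (2:ℝ) * -γ = -(2 * γ) by ring, mul_comm]
  have h3 : σ ^ (γ - 1) * ((2 * σ) ^ γ * (σ - a) ^ (-(2 * γ)))
      = 2 ^ γ * σ ^ (2 * γ - 1) * (σ - a) ^ (-(2 * γ)) := by
    rw [Real.mul_rpow (by norm_num) hσ0.le]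
    rw [show σ ^ (γ - 1) * (2 ^ γ * σ ^ γ * (σ - a) ^ (-(2 * γ)))
        = 2 ^ γ * (σ ^ (γ - 1) * σ ^ γ) * (σ - a) ^ (-(2 * γ)) by ring]
    rw [← Real.rpow_add hσ0]
    ring_nf
  have h4 : σ ^ (2 * γ - 1) ≤ a ^ (2 * γ - 1) :=
    Real.rpow_le_rpow_of_nonpos ha hσ.le (by linarith)
  calc σ ^ (γ - 1) * (σ * (Real.log σ - Real.log a) - (σ - a)) ^ (-γ)
      ≤ σ ^ (γ - 1) * ((2 * σ) ^ γ * (σ - a) ^ (-(2 * γ))) := by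
        rw [← h2]; exact mul_le_mul_of_nonneg_left h1 (Real.rpow_nonneg hσ0.le _)
    _ = 2 ^ γ * σ ^ (2 * γ - 1) * (σ - a) ^ (-(2 * γ)) := h3
    _ ≤ 2 ^ γ * a ^ (2 * γ - 1) * (σ - a) ^ (-(2 * γ)) := by
        apply mul_le_mul_of_nonneg_right _ (Real.rpow_nonneg hsa.le _)
        exact mul_le_mul_of_nonneg_left h4 (Real.rpow_nonneg (by norm_num) _)

theorem stmt_7 (γ : ℝ) (hγ : γ ∈ Set.Ioo (0 : ℝ) (1 / 2)) :
    ∃ C : ℝ, ∀ a ∈ Set.Ioo (0 : ℝ) (Real.exp (-2)),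
      MeasureTheory.IntegrableOn
        (fun σ : ℝ => σ ^ (γ - 1) * (σ * (Real.log σ - Real.log a) - (σ - a)) ^ (-γ))
        (Set.Ioo a (Real.exp 2 * a)) ∧
      ∫ σ in Set.Ioo a (Real.exp 2 * a),
          σ ^ (γ - 1) * (σ * (Real.log σ - Real.log a) - (σ - a)) ^ (-γ)
        ≤ C := by
  obtain ⟨hγ0, hγ1⟩ := hγ
  refine ⟨2 ^ γ * (Real.exp 2 - 1) ^ (1 - 2 * γ) / (1 - 2 * γ), fun a ha => ?_⟩
  obtain ⟨ha0, _⟩ := ha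
  set b : ℝ := Real.exp 2 * a with hb
  have he2 : (1:ℝ) < Real.exp 2 := by
    have := Real.add_one_le_exp (2:ℝ); linarith
  have hab : a < b := by
    rw [hb]; nlinarith
  set f : ℝ → ℝ :=
    fun σ : ℝ => σ ^ (γ - 1) * (σ * (Real.log σ - Real.log a) - (σ - a)) ^ (-γ) with hf
  set g : ℝ → ℝ := fun σ : ℝ => 2 ^ γ * a ^ (2 * γ - 1) * (σ - a) ^ (-(2 * γ)) with hg
  have hr : (-1:ℝ) < -(2 * γ) := by linarith
  -- integrability of g
  have hgInt : IntegrableOn g (Set.Ioo a b) := by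
    have h1 : IntervalIntegrable (fun x : ℝ => x ^ (-(2 * γ))) volume 0 (b - a) :=
      intervalIntegral.intervalIntegrable_rpow' hr
    have h2 := (h1.comp_sub_right a).const_mul (2 ^ γ * a ^ (2 * γ - 1))
    simp only [zero_add, sub_add_cancel] at h2
    rw [intervalIntegrable_iff_integrableOn_Ioo_of_le hab.le] at h2
    exact h2
  -- pointwise bound on Ioo a b
  have hbound : ∀ σ ∈ Set.Ioo a b, f σ ≤ g σ := fun σ hσ =>
    aux_bound γ a σ hγ0 hγ1 ha0 hσ.1
  have hfnn : ∀ σ ∈ Set.Ioo a b, 0 ≤ f σ := by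
    intro σ hσ
    have hσ0 : 0 < σ := ha0.trans hσ.1
    exact mul_nonneg (Real.rpow_nonneg hσ0.le _) (Real.rpow_nonneg
      (le_trans (by positivity) (aux_key a σ ha0 hσ.1)) _)
  -- measurability
  have hmeas : AEStronglyMeasurable f (volume.restrict (Set.Ioo a b)) := by
    apply ContinuousOn.aestronglyMeasurable _ measurableSet_Ioo
    apply continuousOn_of_forall_continuousAt
    intro σ hσ
    have hσ0 : 0 < σ := ha0.trans hσ.1
    have hsa : 0 < σ - a := sub_pos.mpr hσ.1
    have hpos : 0 < σ * (Real.log σ - Real.log a) - (σ - a) :=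
      lt_of_lt_of_le (by positivity : (0:ℝ) < (σ - a) ^ 2 / (2 * σ)) (aux_key a σ ha0 hσ.1)
    have hc : ContinuousAt (fun σ : ℝ => σ * (Real.log σ - Real.log a) - (σ - a)) σ :=
      (continuousAt_id.mul ((Real.continuousAt_log hσ0.ne').sub continuousAt_const)).sub
        (continuousAt_id.sub continuousAt_const)
    exact (Real.continuousAt_rpow_const σ (γ - 1) (Or.inl hσ0.ne')).mul
      (hc.rpow_const (Or.inl hpos.ne'))
  -- integrability of f
  have hfInt : IntegrableOn f (Set.Ioo a b) := by
    apply Integrable.mono' hgInt hmeas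
    filter_upwards [ae_restrict_mem measurableSet_Ioo] with σ hσ
    rw [Real.norm_eq_abs, abs_of_nonneg (hfnn σ hσ)]
    exact hbound σ hσ
  refine ⟨hfInt, ?_⟩
  -- compute the g integral
  have hgval : ∫ σ in Set.Ioo a b, g σ
      = 2 ^ γ * (Real.exp 2 - 1) ^ (1 - 2 * γ) / (1 - 2 * γ) := by
    rw [← integral_Ioc_eq_integral_Ioo, ← intervalIntegral.integral_of_le hab.le]
    have : (∫ σ in a..b, g σ)
        = (2 ^ γ * a ^ (2 * γ - 1)) * ∫ σ in a..b, (σ - a) ^ (-(2 * γ)) := by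
      rw [← intervalIntegral.integral_const_mul]
    rw [this, intervalIntegral.integral_comp_sub_right (fun x => x ^ (-(2 * γ))) a,
      sub_self]
    rw [integral_rpow (Or.inl hr)]
    rw [Real.zero_rpow (by intro h; nlinarith [h] : -(2 * γ) + 1 ≠ 0), sub_zero]
    have hba : b - a = (Real.exp 2 - 1) * a := by rw [hb]; ring
    rw [hba, Real.mul_rpow (by linarith) ha0.le]
    rw [show -(2 * γ) + 1 = 1 - 2 * γ by ring]
    rw [show 2 ^ γ * a ^ (2 * γ - 1) * ((Real.exp 2 - 1) ^ (1 - 2 * γ) * a ^ (1 - 2 * γ) / (1 - 2 * γ))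
        = 2 ^ γ * (Real.exp 2 - 1) ^ (1 - 2 * γ) / (1 - 2 * γ) * (a ^ (2 * γ - 1) * a ^ (1 - 2 * γ)) by ring]
    rw [← Real.rpow_add ha0, show 2 * γ - 1 + (1 - 2 * γ) = 0 by ring, Real.rpow_zero,
      mul_one]
  calc ∫ σ in Set.Ioo a b, f σ ≤ ∫ σ in Set.Ioo a b, g σ :=
        setIntegral_mono_on hfInt hgInt measurableSet_Ioo hbound
    _ = _ := hgval
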